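/- Let T be a rooted tree in which some internal node v has at least 3 non-leaf children, and let T' be obtained from T by replacing two non-leaf subtrees T_1, T_2 of v by a single new child subtree whose root has T_1 and T_2 as its two subtrees (bifurcatization). Then N(T') > N(T), where N counts labeled histories. -/

import Mathlib

inductive RTree : Type where
  | leaf : RTree
  | node : List RTree → RTree

namespace RTree

def leaves : RTree → ℕ
  | leaf => 1
  | node cs => (cs.attach.map fun c => leaves c.1).sum
decreasing_by simp only [node.sizeOf_spec]; have := List.sizeOf_lt_of_mem c.2; omega

def wcount : RTree → ℕ
  | leaf => 0
  | node cs => 1 + (cs.attach.map fun c => wcount c.1).sum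
decreasing_by simp only [node.sizeOf_spec]; have := List.sizeOf_lt_of_mem c.2; omega

def delta : RTree → ℕ
  | leaf => 0
  | node cs => 1 + (cs.attach.map fun c => delta c.1).foldr max 0
decreasing_by simp only [node.sizeOf_spec]; have := List.sizeOf_lt_of_mem c.2; omega

def prodW : RTree → ℕ
  | leaf => 1
  | node cs =>
      (1 + (cs.attach.map fun c => wcount c.1).sum) * (cs.attach.map fun c => prodW c.1).prod
decreasing_by simp only [node.sizeOf_spec]; have := List.sizeOf_lt_of_mem c.2; omega

def subtreeAt : List ℕ → RTree → Option RTree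
  | [], t => some t
  | _ :: _, leaf => none
  | i :: p, node cs => (cs[i]?).bind (fun c => subtreeAt p c)

def Internal (T : RTree) : Type := {p : List ℕ // ∃ cs, subtreeAt p T = some (node cs)}

def IsLabeledHistory (T : RTree) (f : Internal T → Fin (wcount T)) : Prop :=
  Function.Bijective f ∧ ∀ u v : Internal T, v.1 <+: u.1 → v.1 ≠ u.1 → f u < f v

noncomputable def N (T : RTree) : ℕ :=
  Nat.card {f : Internal T → Fin (wcount T) // IsLabeledHistory T f}

def IsTieHistory (T : RTree) (z : ℕ) (f : Internal T → Fin z) : Prop :=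
  Function.Surjective f ∧ ∀ u v : Internal T, v.1 <+: u.1 → v.1 ≠ u.1 → f u < f v

noncomputable def E (T : RTree) (z : ℕ) : ℕ :=
  Nat.card {f : Internal T → Fin z // IsTieHistory T z f}

noncomputable def NTie (T : RTree) : ℕ :=
  Nat.card ((z : ℕ) × {f : Internal T → Fin z // IsTieHistory T z f})

def replaceAt : List ℕ → RTree → RTree → RTree
  | [], _, s => s
  | _ :: _, leaf, _ => leaf
  | i :: p, node cs, s => node (cs.set i (replaceAt p (cs.getD i leaf) s))

end RTree

namespace RTree

theorem subtreeAt_append (q r : List ℕ) : ∀ (t : RTree),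
    subtreeAt (q ++ r) t = (subtreeAt q t).bind (fun u => subtreeAt r u) := by
  induction q with
  | nil => intro t; simp [subtreeAt]
  | cons i q ih =>
    intro t
    cases t with
    | leaf => simp [subtreeAt]
    | node cs =>
      simp only [List.cons_append, subtreeAt]
      cases cs[i]? with
      | none => simp
      | some c => simp [ih]

theorem subtreeAt_replaceAt (s : RTree) : ∀ (q r : List ℕ) (t u : RTree),
    subtreeAt q t = some u →
    subtreeAt q (replaceAt (q ++ r) t s) = some (replaceAt r u s) := by
  intro q
  induction q with
  | nil =>
    intro r t u h
    simp [subtreeAt] at h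
    subst h; simp [subtreeAt]
  | cons i q ih =>
    intro r t u h
    cases t with
    | leaf => simp [subtreeAt] at h
    | node cs =>
      simp only [subtreeAt] at h
      cases hg : cs[i]? with
      | none => simp [hg] at h
      | some c =>
        simp only [hg, Option.bind_some] at h
        obtain ⟨hlt, hget⟩ := List.getElem?_eq_some_iff.1 hg
        have hgd : cs[i]?.getD leaf = c := by
          rw [hg]; rfl
        simp only [List.cons_append, replaceAt, subtreeAt]
        rw [List.getElem?_set_self hlt]
        simp [hgd, ih r c u h]

theorem subtreeAt_replaceAt_of_incomp (s : RTree) : ∀ (q pp : List ℕ) (t : RTree),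
    ¬ pp <+: q → ¬ q <+: pp →
    subtreeAt q (replaceAt pp t s) = subtreeAt q t := by
  intro q
  induction q with
  | nil => intro pp t _ h2; exact absurd (List.nil_prefix) h2
  | cons j q ih =>
    intro pp t h1 h2
    cases pp with
    | nil => exact absurd (List.nil_prefix) h1
    | cons i pp =>
      cases t with
      | leaf => simp [replaceAt]
      | node cs =>
        simp only [replaceAt, subtreeAt]
        by_cases hij : i = j
        · subst hij
          have h1' : ¬ pp <+: q := fun h => h1 (by simp [List.cons_prefix_cons, h])
          have h2' : ¬ q <+: pp := fun h => h2 (by simp [List.cons_prefix_cons, h])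
          by_cases hlt : i < cs.length
          · rw [List.getElem?_set_self hlt, List.getElem?_eq_getElem hlt]
            have hgd : cs.getD i leaf = cs.get ⟨i, hlt⟩ := by
              simp [List.getD_eq_getElem?_getD, List.getElem?_eq_getElem hlt, List.get_eq_getElem]
            simp only [Option.bind_some]
            rw [ih pp _ h1' h2', hgd]; rfl
          · have hlen : cs.length ≤ i := le_of_not_gt hlt
            rw [List.getElem?_eq_none (by simpa using hlen), List.getElem?_eq_none hlen]
        · rw [List.getElem?_set_ne hij]


instance optFinite {α : Type} [Finite α] : Finite (Option α) :=
  Finite.of_equiv _ (Equiv.optionEquivSumPUnit.{0,0} α).symm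

def nodeChild (l : List RTree) : Option ((i : Fin l.length) × Internal (l.get i)) → Internal (node l)
  | none => ⟨[], l, rfl⟩
  | some ⟨i, r⟩ => ⟨i.1 :: r.1, by
      obtain ⟨ds, hds⟩ := r.2
      exact ⟨ds, by simp [subtreeAt, List.getElem?_eq_getElem i.2, ← List.get_eq_getElem, hds]⟩⟩

theorem nodeChild_bijective (l : List RTree) : Function.Bijective (nodeChild l) := by
  constructor
  · rintro (_ | ⟨i, r⟩) (_ | ⟨j, t⟩) h
    · rfl
    · exact absurd (congrArg (fun z => z.1) h) (by simp [nodeChild])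
    · exact absurd (congrArg (fun z => z.1) h) (by simp [nodeChild])
    · have h' : i.1 :: r.1 = j.1 :: t.1 := congrArg (fun z => z.1) h
      have hij : i = j := Fin.ext (List.cons.inj h').1
      subst hij
      have hrt : r = t := Subtype.ext (List.cons.inj h').2
      subst hrt; rfl
  · rintro ⟨m, ds, hds⟩
    cases m with
    | nil => exact ⟨none, Subtype.ext rfl⟩
    | cons i rr =>
      simp only [subtreeAt] at hds
      cases hg : l[i]? with
      | none => simp [hg] at hds
      | some c =>
        simp only [hg, Option.bind_some] at hds
        obtain ⟨hlt, hget⟩ := List.getElem?_eq_some_iff.1 hg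
        exact ⟨some ⟨⟨i, hlt⟩, ⟨rr, ⟨ds, by rw [List.get_eq_getElem, hget]; exact hds⟩⟩⟩, Subtype.ext rfl⟩

theorem finite_internal : ∀ (t : RTree), Finite (Internal t) := by
  suffices h : ∀ (n : ℕ) (t : RTree), sizeOf t ≤ n → Finite (Internal t) by
    intro t; exact h (sizeOf t) t le_rfl
  intro n
  induction n with
  | zero =>
    intro t h
    exfalso; cases t <;> simp_all <;> omega
  | succ n ih =>
    intro t ht
    cases t with
    | leaf =>
      have : IsEmpty (Internal leaf) := by
        constructor
        rintro ⟨m, ds, hds⟩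
        cases m <;> simp [subtreeAt] at hds
      infer_instance
    | node l =>
      haveI : ∀ i : Fin l.length, Finite (Internal (l.get i)) := by
        intro i
        apply ih
        have h1 : sizeOf (l.get i) < sizeOf l := List.sizeOf_lt_of_mem (l.get_mem ..)
        have h2 : sizeOf (node l) = 1 + sizeOf l := by simp
        omega
      exact Finite.of_surjective _ (nodeChild_bijective l).2

instance (t : RTree) : Finite (Internal t) := finite_internal t

theorem sum_map_get (l : List RTree) (f : RTree → ℕ) :
    ∑ i : Fin l.length, f (l.get i) = (l.map f).sum := by
  induction l with
  | nil => simp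
  | cons a l ih =>
    rw [List.map_cons, List.sum_cons, ← ih]
    exact Fin.sum_univ_succ _

theorem card_internal : ∀ (t : RTree), Nat.card (Internal t) = wcount t := by
  suffices h : ∀ (n : ℕ) (t : RTree), sizeOf t ≤ n → Nat.card (Internal t) = wcount t by
    intro t; exact h (sizeOf t) t le_rfl
  intro n
  induction n with
  | zero =>
    intro t h
    exfalso; cases t <;> simp_all <;> omega
  | succ n ih =>
    intro t ht
    cases t with
    | leaf =>
      have he : IsEmpty (Internal leaf) := by
        constructor
        rintro ⟨m, ds, hds⟩
        cases m <;> simp [subtreeAt] at hds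
      simp [Nat.card_of_isEmpty, wcount]
    | node l =>
      have hsz : ∀ i : Fin l.length, sizeOf (l.get i) ≤ n := by
        intro i
        have h1 : sizeOf (l.get i) < sizeOf l := List.sizeOf_lt_of_mem (l.get_mem ..)
        have h2 : sizeOf (node l) = 1 + sizeOf l := by simp
        omega
      have e := Equiv.ofBijective _ (nodeChild_bijective l)
      have h1 : Nat.card (Internal (node l)) =
          Nat.card (Option ((i : Fin l.length) × Internal (l.get i))) :=
        Nat.card_congr e.symm
      rw [h1, Finite.card_option]
      haveI : ∀ i : Fin l.length, Fintype (Internal (l.get i)) :=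
        fun i => Fintype.ofFinite _
      rw [Nat.card_eq_fintype_card, Fintype.card_sigma]
      have h2 : ∀ i : Fin l.length, Fintype.card (Internal (l.get i)) = wcount (l.get i) := by
        intro i
        rw [← Nat.card_eq_fintype_card]
        exact ih _ (hsz i)
      rw [Finset.sum_congr rfl (fun i _ => h2 i)]
      show ∑ i : Fin l.length, wcount (l.get i) + 1 = wcount (node l)
      rw [sum_map_get]
      have hw : wcount (node l) = 1 + (l.attach.map fun c => wcount c.1).sum := by
        rw [wcount]
      rw [hw, List.attach_map_val (l := l) (f := wcount)]
      omega


theorem exists_linext {α : Type} [Finite α] (s : α → α → Prop)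
    (hrefl : ∀ a, s a a) (htrans : ∀ a b c, s a b → s b c → s a c)
    (hanti : ∀ a b, s a b → s b a → a = b) :
    ∃ g : α → Fin (Nat.card α), Function.Bijective g ∧
      ∀ u w, s u w → u ≠ w → g u < g w := by
  haveI : IsPartialOrder α s :=
    { refl := hrefl, trans := htrans, antisymm := hanti }
  obtain ⟨r, hr, hsr⟩ := extend_partialOrder s
  haveI := hr
  letI : LinearOrder α :=
    { le := r
      le_refl := fun a => refl_of r a
      le_trans := fun a b c => trans_of r
      le_antisymm := fun a b => antisymm_of r
      le_total := fun a b => total_of r a b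
      toDecidableLE := fun a b => Classical.propDecidable _ }
  letI := Fintype.ofFinite α
  have hcard : Fintype.card α = Nat.card α := (Nat.card_eq_fintype_card (α := α)).symm
  refine ⟨fun x => (monoEquivOfFin α hcard).symm x, (monoEquivOfFin α hcard).symm.bijective, ?_⟩
  intro u w hsu hne
  have h1 : u ≤ w := hsr _ _ hsu
  have h2 : u < w := lt_of_le_of_ne h1 hne
  exact (monoEquivOfFin α hcard).symm.strictMono h2

def rho (a b : ℕ) : List ℕ → List ℕ
  | [] => []
  | i :: r =>
    if i = a then a :: 0 :: r
    else if i = a + b + 1 then a :: 1 :: r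
    else if a + b + 1 < i then (i - 1) :: r
    else i :: r

theorem rho_ne_nil (a b : ℕ) (i : ℕ) (r : List ℕ) : rho a b (i :: r) ≠ [] := by
  simp only [rho]; split_ifs <;> simp

theorem rho_prefix (a b : ℕ) : ∀ m₁ m₂ : List ℕ, (rho a b m₁ <+: rho a b m₂ ↔ m₁ <+: m₂)
  | [], m₂ => by
    simp only [rho]
    exact iff_of_true (List.nil_prefix) (List.nil_prefix)
  | i :: r, [] => by
    simp only [rho]
    constructor
    · intro h; exact absurd (List.prefix_nil.mp h) (rho_ne_nil a b i r)
    · intro h; exact absurd (List.prefix_nil.mp h) (by simp)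
  | i₁ :: r₁, i₂ :: r₂ => by
    simp only [rho]
    split_ifs <;>
      simp only [List.cons_prefix_cons] <;>
      constructor <;>
      intro hyp <;>
      first
        | (exact ⟨by omega, hyp.2⟩)
        | (exact ⟨by omega, by omega, hyp.2⟩)
        | (exact ⟨by omega, by omega, hyp.2.2⟩)
        | (exact ⟨by omega, hyp.2.2⟩)
        | (exfalso; omega)
        | (exfalso; rcases hyp with ⟨h1, h2, h3⟩; omega)
        | (exfalso; rcases hyp with ⟨h1, h2⟩; omega)
        | (exact ⟨trivial, trivial, hyp.2⟩)

theorem rho_eq_single (a b : ℕ) (m : List ℕ) (h : rho a b m = [a]) : False := by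
  cases m with
  | nil => simp [rho] at h
  | cons i r =>
    simp only [rho] at h
    split_ifs at h <;> simp_all <;> omega

def sig (pp : List ℕ) (a b : ℕ) (q : List ℕ) : List ℕ :=
  if pp <+: q then pp ++ rho a b (q.drop pp.length) else q

theorem sig_append (pp : List ℕ) (a b : ℕ) (m : List ℕ) :
    sig pp a b (pp ++ m) = pp ++ rho a b m := by
  rw [sig, if_pos (List.prefix_append pp m), List.drop_left]

theorem sig_of_not_prefix (pp : List ℕ) (a b : ℕ) (q : List ℕ) (h : ¬ pp <+: q) :
    sig pp a b q = q := if_neg h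

theorem sig_self (pp : List ℕ) (a b : ℕ) : sig pp a b pp = pp := by
  have := sig_append pp a b []
  simpa [rho] using this

theorem prefix_append_iff_of_not_prefix {pp q x : List ℕ} (h : ¬ pp <+: q) :
    (q <+: pp ++ x ↔ q <+: pp) := by
  constructor
  · intro hq
    rcases le_or_gt q.length pp.length with hl | hl
    · exact List.prefix_of_prefix_length_le hq (List.prefix_append pp x) hl
    · exact absurd (List.prefix_of_prefix_length_le (List.prefix_append pp x) hq hl.le) h
  · intro hq
    exact hq.trans (List.prefix_append pp x)

theorem sig_prefix (pp : List ℕ) (a b : ℕ) : ∀ q₁ q₂ : List ℕ,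
    (sig pp a b q₁ <+: sig pp a b q₂ ↔ q₁ <+: q₂) := by
  intro q₁ q₂
  by_cases h₁ : pp <+: q₁ <;> by_cases h₂ : pp <+: q₂
  · obtain ⟨m₁, rfl⟩ := h₁
    obtain ⟨m₂, rfl⟩ := h₂
    rw [sig_append, sig_append, List.prefix_append_right_inj, List.prefix_append_right_inj]
    exact rho_prefix a b m₁ m₂
  · obtain ⟨m₁, rfl⟩ := h₁
    rw [sig_append, sig_of_not_prefix _ _ _ _ h₂]
    constructor
    · intro h; exact absurd ((List.prefix_append pp _).trans h) h₂
    · intro h; exact absurd ((List.prefix_append pp _).trans h) h₂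
  · obtain ⟨m₂, rfl⟩ := h₂
    rw [sig_append, sig_of_not_prefix _ _ _ _ h₁]
    rw [prefix_append_iff_of_not_prefix h₁, prefix_append_iff_of_not_prefix h₁]
  · rw [sig_of_not_prefix _ _ _ _ h₁, sig_of_not_prefix _ _ _ _ h₂]

theorem sig_injective (pp : List ℕ) (a b : ℕ) : Function.Injective (sig pp a b) := by
  intro q₁ q₂ h
  have h1 : q₁ <+: q₂ := (sig_prefix pp a b q₁ q₂).mp (h ▸ List.prefix_refl _)
  have h2 : q₂ <+: q₁ := (sig_prefix pp a b q₂ q₁).mp (h ▸ List.prefix_refl _)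
  exact h1.eq_of_length (h1.length_le.antisymm h2.length_le)

theorem sig_ne_new (pp : List ℕ) (a b : ℕ) (q : List ℕ) : sig pp a b q ≠ pp ++ [a] := by
  by_cases h : pp <+: q
  · obtain ⟨m, rfl⟩ := h
    rw [sig_append]
    intro hc
    exact rho_eq_single a b m (List.append_cancel_left hc)
  · rw [sig_of_not_prefix _ _ _ _ h]
    rintro rfl
    exact h (List.prefix_append pp [a])


def IntP (t : RTree) (q : List ℕ) : Prop := ∃ ds, subtreeAt q t = some (node ds)

theorem intP_node (l : List RTree) (i : ℕ) (r : List ℕ) :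
    IntP (node l) (i :: r) ↔ ∃ c, l[i]? = some c ∧ IntP c r := by
  simp only [IntP, subtreeAt]
  cases hg : l[i]? with
  | none => simp [hg]
  | some c =>
    simp [hg]

theorem intP_node_nil (l : List RTree) : IntP (node l) [] := ⟨l, rfl⟩

section indices

variable (l₁ l₂ l₃ : List RTree) (t₁ t₂ : RTree)

theorem getW4 : (l₁ ++ t₁ :: (l₂ ++ t₂ :: l₃))[l₁.length]? = some t₁ := by
  rw [List.getElem?_append_right le_rfl, Nat.sub_self]; rfl

theorem getW6 : (l₁ ++ node [t₁, t₂] :: (l₂ ++ l₃))[l₁.length]? = some (node [t₁, t₂]) := by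
  rw [List.getElem?_append_right le_rfl, Nat.sub_self]; rfl

theorem getW5 :
    (l₁ ++ t₁ :: (l₂ ++ t₂ :: l₃))[(l₁.length + l₂.length + 1)]? = some t₂ := by
  rw [List.getElem?_append_right (by omega)]
  have h : l₁.length + l₂.length + 1 - l₁.length = l₂.length + 1 := by omega
  rw [h, List.getElem?_cons_succ, List.getElem?_append_right le_rfl, Nat.sub_self]; rfl

theorem getW1 (i : ℕ) (h : i < l₁.length) :
    (l₁ ++ node [t₁, t₂] :: (l₂ ++ l₃))[i]? = (l₁ ++ t₁ :: (l₂ ++ t₂ :: l₃))[i]? := by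
  rw [List.getElem?_append_left h, List.getElem?_append_left h]

theorem getW2 (i : ℕ) (h1 : l₁.length < i) (h2 : i ≤ l₁.length + l₂.length) :
    (l₁ ++ node [t₁, t₂] :: (l₂ ++ l₃))[i]? = (l₁ ++ t₁ :: (l₂ ++ t₂ :: l₃))[i]? := by
  rw [List.getElem?_append_right (by omega), List.getElem?_append_right (by omega)]
  have h3 : i - l₁.length = (i - l₁.length - 1) + 1 := by omega
  rw [h3, List.getElem?_cons_succ, List.getElem?_cons_succ]
  have h4 : i - l₁.length - 1 < l₂.length := by omega
  rw [List.getElem?_append_left h4, List.getElem?_append_left h4]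

theorem getW3 (i : ℕ) (h : l₁.length + l₂.length + 1 ≤ i) :
    (l₁ ++ node [t₁, t₂] :: (l₂ ++ l₃))[i]? = (l₁ ++ t₁ :: (l₂ ++ t₂ :: l₃))[(i + 1)]? := by
  rw [List.getElem?_append_right (by omega), List.getElem?_append_right (by omega)]
  have h3 : i - l₁.length = (i - l₁.length - 1) + 1 := by omega
  have h4 : i + 1 - l₁.length = (i - l₁.length - 1) + 2 := by omega
  rw [h3, h4, List.getElem?_cons_succ, List.getElem?_cons_succ]
  have h5 : l₂.length ≤ i - l₁.length - 1 := by omega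
  rw [List.getElem?_append_right h5, List.getElem?_append_right (by omega)]
  have h6 : i - l₁.length - 1 + 1 - l₂.length = (i - l₁.length - 1 - l₂.length) + 1 := by omega
  rw [h6, List.getElem?_cons_succ]

theorem mem_trans_fwd (m : List ℕ)
    (h : IntP (node (l₁ ++ t₁ :: (l₂ ++ t₂ :: l₃))) m) :
    IntP (node (l₁ ++ node [t₁, t₂] :: (l₂ ++ l₃))) (rho l₁.length l₂.length m) := by
  cases m with
  | nil => exact intP_node_nil _
  | cons i r =>
    rw [intP_node] at h
    obtain ⟨c, hc, hcr⟩ := h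
    simp only [rho]
    split_ifs with hA hB hC
    · -- i = a : c = t₁
      subst hA
      rw [getW4] at hc
      obtain rfl : t₁ = c := by injection hc
      rw [intP_node]
      refine ⟨node [t₁, t₂], getW6 l₁ l₂ l₃ t₁ t₂, ?_⟩
      rw [intP_node]
      exact ⟨t₁, rfl, hcr⟩
    · -- i = a + b + 1 : c = t₂
      have hB' : i = l₁.length + l₂.length + 1 := by omega
      subst hB'
      rw [getW5] at hc
      obtain rfl : t₂ = c := by injection hc
      rw [intP_node]
      refine ⟨node [t₁, t₂], getW6 l₁ l₂ l₃ t₁ t₂, ?_⟩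
      rw [intP_node]
      exact ⟨t₂, rfl, hcr⟩
    · -- i > a + b + 1
      rw [intP_node]
      refine ⟨c, ?_, hcr⟩
      have h' : i - 1 + 1 = i := by omega
      rw [getW3 _ _ _ _ _ _ (by omega), h']
      exact hc
    · -- id region
      rw [intP_node]
      refine ⟨c, ?_, hcr⟩
      rcases lt_or_ge i l₁.length with h' | h'
      · rw [getW1 _ _ _ _ _ _ h']; exact hc
      · have h'' : l₁.length < i := by omega
        rw [getW2 _ _ _ _ _ _ h'' (by omega)]; exact hc

theorem mem_trans_bwd (m' : List ℕ)
    (h : IntP (node (l₁ ++ node [t₁, t₂] :: (l₂ ++ l₃))) m') :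
    m' = [l₁.length] ∨
      ∃ m, IntP (node (l₁ ++ t₁ :: (l₂ ++ t₂ :: l₃))) m ∧ rho l₁.length l₂.length m = m' := by
  cases m' with
  | nil =>
    right
    exact ⟨[], intP_node_nil _, rfl⟩
  | cons i r =>
    rw [intP_node] at h
    obtain ⟨c, hc, hcr⟩ := h
    by_cases hA : i = l₁.length
    · subst hA
      rw [getW6] at hc
      obtain rfl : node [t₁, t₂] = c := by injection hc
      cases r with
      | nil => exact Or.inl rfl
      | cons j r' =>
        right
        rw [intP_node] at hcr
        obtain ⟨d, hd, hdr⟩ := hcr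
        match j, hd with
        | 0, hd =>
          obtain rfl : t₁ = d := by injection hd
          refine ⟨l₁.length :: r', ?_, ?_⟩
          · rw [intP_node]
            exact ⟨t₁, getW4 l₁ l₂ l₃ t₁ t₂, hdr⟩
          · simp [rho]
        | 1, hd =>
          obtain rfl : t₂ = d := by injection hd
          refine ⟨(l₁.length + l₂.length + 1) :: r', ?_, ?_⟩
          · rw [intP_node]
            exact ⟨t₂, getW5 l₁ l₂ l₃ t₁ t₂, hdr⟩
          · simp only [rho]
            split_ifs <;> first | rfl | omega
        | (n+2), hd =>
          exfalso
          have : ([t₁, t₂][(n+2)]?) = none := rfl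
          rw [this] at hd; cases hd
    · right
      rcases lt_or_ge i l₁.length with h' | h'
      · refine ⟨i :: r, ?_, ?_⟩
        · rw [intP_node]
          refine ⟨c, ?_, hcr⟩
          rw [← getW1 _ _ _ _ _ _ h']; exact hc
        · simp only [rho]; split_ifs <;> first | rfl | omega
      · rcases le_or_gt i (l₁.length + l₂.length) with h'' | h''
        · refine ⟨i :: r, ?_, ?_⟩
          · rw [intP_node]
            refine ⟨c, ?_, hcr⟩
            rw [← getW2 _ _ _ _ _ _ (by omega) h'']; exact hc
          · simp only [rho]; split_ifs <;> first | rfl | omega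
        · refine ⟨(i + 1) :: r, ?_, ?_⟩
          · rw [intP_node]
            refine ⟨c, ?_, hcr⟩
            rw [← getW3 _ _ _ _ _ _ (by omega)]; exact hc
          · simp only [rho]; split_ifs <;> first | rfl | omega

end indices


theorem succAbove_val {n : ℕ} (c : Fin (n+1)) (i : Fin n) :
    (c.succAbove i).val = if i.val < c.val then i.val else i.val + 1 := by
  rw [Fin.succAbove]; split <;> split <;> simp_all [Fin.lt_def] <;> omega

/-- bifurcatization strictly increases the number of labeled histories.
If an internal node `v` of `T` (at position `p`) has children `cs` containing at
least three non-leaf subtrees, and `T'` is obtained by replacing two non-leaf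
children `t₁, t₂` of `v` by a single new child whose two subtrees are `t₁` and
`t₂`, then `N(T') > N(T)`. -/
theorem N_lt_of_bifurcatization (T T' : RTree) (p : List ℕ)
    (cs l₁ l₂ l₃ : List RTree) (t₁ t₂ : RTree)
    (hsub : subtreeAt p T = some (node cs))
    (hcs : cs = l₁ ++ t₁ :: l₂ ++ t₂ :: l₃)
    (h1 : t₁ ≠ leaf) (h2 : t₂ ≠ leaf)
    (h3 : ∃ t₃ ∈ l₁ ++ l₂ ++ l₃, t₃ ≠ leaf)
    (hT' : T' = replaceAt p T (node (l₁ ++ node [t₁, t₂] :: l₂ ++ l₃))) :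
    N T < N T' := by
  classical
  subst hcs
  subst hT'
  have hnorm : (l₁ ++ node [t₁, t₂] :: l₂ ++ l₃ : List RTree)
      = l₁ ++ node [t₁, t₂] :: (l₂ ++ l₃) := by simp
  rw [hnorm]
  set a := l₁.length with ha
  set b := l₂.length with hb
  set T' := replaceAt p T (node (l₁ ++ node [t₁, t₂] :: (l₂ ++ l₃))) with hT'
  have hsub' : subtreeAt p T' = some (node (l₁ ++ node [t₁, t₂] :: (l₂ ++ l₃))) := by
    have h := subtreeAt_replaceAt (node (l₁ ++ node [t₁, t₂] :: (l₂ ++ l₃))) p [] T _ hsub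
    rw [List.append_nil] at h
    rw [hT']
    simpa [replaceAt] using h
  -- membership transfer
  have MS1 : ∀ q : List ℕ, ¬ p <+: q → (IntP T q ↔ IntP T' q) := by
    intro q hq
    by_cases hqp : q <+: p
    · obtain ⟨r, rfl⟩ := hqp
      have hr : r ≠ [] := by
        rintro rfl
        rw [List.append_nil] at hq
        exact hq (List.prefix_refl q)
      obtain ⟨u, hu, hru⟩ : ∃ u, subtreeAt q T = some u ∧
          subtreeAt r u = some (node (l₁ ++ t₁ :: (l₂ ++ t₂ :: l₃))) := by
        have h0 := subtreeAt_append q r T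
        rw [hsub] at h0
        cases hq2 : subtreeAt q T with
        | none => rw [hq2] at h0; simp at h0
        | some u =>
          rw [hq2] at h0
          exact ⟨u, rfl, by simpa using h0.symm⟩
      obtain ⟨du, rfl⟩ : ∃ du, u = node du := by
        cases u with
        | leaf =>
          cases r with
          | nil => exact absurd rfl hr
          | cons i r' => exact absurd hru (by simp [subtreeAt])
        | node du => exact ⟨du, rfl⟩
      constructor
      · intro _
        have h4 := subtreeAt_replaceAt (node (l₁ ++ node [t₁, t₂] :: (l₂ ++ l₃))) q r T (node du) hu
        cases r with
        | nil => exact absurd rfl hr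
        | cons i r' =>
          refine ⟨du.set i (replaceAt r' (du.getD i leaf) (node (l₁ ++ node [t₁, t₂] :: (l₂ ++ l₃)))), ?_⟩
          rw [hT', h4]
          rfl
      · intro _
        exact ⟨du, hu⟩
    · have h4 := subtreeAt_replaceAt_of_incomp (node (l₁ ++ node [t₁, t₂] :: (l₂ ++ l₃))) q p T hq hqp
      unfold IntP
      rw [hT', h4]
  have MS2 : ∀ m : List ℕ, IntP T (p ++ m) ↔ IntP (node (l₁ ++ t₁ :: (l₂ ++ t₂ :: l₃))) m := by
    intro m
    unfold IntP
    rw [subtreeAt_append, hsub]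
    simp
  have MS2' : ∀ m : List ℕ, IntP T' (p ++ m) ↔ IntP (node (l₁ ++ node [t₁, t₂] :: (l₂ ++ l₃))) m := by
    intro m
    unfold IntP
    rw [subtreeAt_append, hsub']
    simp
  have hInew : IntP T' (p ++ [a]) := by
    refine (MS2' [a]).mpr ?_
    rw [intP_node]
    exact ⟨node [t₁, t₂], getW6 l₁ l₂ l₃ t₁ t₂, intP_node_nil _⟩
  have hmap : ∀ q : List ℕ, IntP T q → IntP T' (sig p a b q) := by
    intro q hq
    by_cases hp : p <+: q
    · obtain ⟨m, rfl⟩ := hp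
      rw [sig_append]
      exact (MS2' _).mpr (mem_trans_fwd _ _ _ _ _ m ((MS2 m).mp hq))
    · rw [sig_of_not_prefix _ _ _ _ hp]
      exact (MS1 q hp).mp hq
  -- the equivalence G
  let G : Option (Internal T) → Internal T' := fun z =>
    match z with
    | none => ⟨p ++ [a], hInew⟩
    | some x => ⟨sig p a b x.1, hmap x.1 x.2⟩
  have hGnone : (G none).1 = p ++ [a] := rfl
  have hGsome : ∀ x, (G (some x)).1 = sig p a b x.1 := fun _ => rfl
  have hGinj : Function.Injective G := by
    rintro (_ | x) (_ | y) h
    · rfl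
    · exact absurd (congrArg Subtype.val h).symm (sig_ne_new p a b y.1)
    · exact absurd (congrArg Subtype.val h) (sig_ne_new p a b x.1)
    · have hxy : x.1 = y.1 := sig_injective p a b (congrArg Subtype.val h)
      exact congrArg some (Subtype.ext hxy)
  have hGsurj : Function.Surjective G := by
    rintro ⟨q', hq'⟩
    by_cases hnew : q' = p ++ [a]
    · exact ⟨none, Subtype.ext hnew.symm⟩
    · by_cases hp : p <+: q'
      · obtain ⟨m', rfl⟩ := hp
        have hm' : IntP (node (l₁ ++ node [t₁, t₂] :: (l₂ ++ l₃))) m' := (MS2' m').mp hq'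
        rcases mem_trans_bwd _ _ _ _ _ m' hm' with h | ⟨m, hm, hrm⟩
        · exact absurd (by rw [h]) hnew
        · refine ⟨some ⟨p ++ m, (MS2 m).mpr hm⟩, ?_⟩
          apply Subtype.ext
          show sig p a b (p ++ m) = p ++ m'
          rw [sig_append, hrm]
      · refine ⟨some ⟨q', (MS1 q' hp).mpr hq'⟩, ?_⟩
        apply Subtype.ext
        show sig p a b q' = q'
        exact sig_of_not_prefix _ _ _ _ hp
  let GG : Option (Internal T) ≃ Internal T' := Equiv.ofBijective G ⟨hGinj, hGsurj⟩
  have hsymmG : ∀ z, GG.symm (G z) = z := fun z => GG.symm_apply_apply z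
  have hGGapp : ∀ y, G (GG.symm y) = y := fun y => GG.apply_symm_apply y
  -- cardinalities
  haveI : Finite (Internal T) := finite_internal T
  haveI : Finite (Internal T') := finite_internal T'
  have hwT : Nat.card (Internal T) = wcount T := card_internal T
  have hwT' : Nat.card (Internal T') = wcount T' := card_internal T'
  have hcardT' : Nat.card (Internal T') = Nat.card (Internal T) + 1 := by
    rw [← Nat.card_congr GG, Finite.card_option]
  have hw : wcount T + 1 = wcount T' := by omega
  -- v0
  let v₀ : Internal T := ⟨p, ⟨_, hsub⟩⟩
  -- the history map
  let mkF : (Internal T → Fin (wcount T)) → Internal T' → Fin (wcount T') := fun f y =>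
    Fin.cast hw ((finSuccEquiv' (Fin.castSucc (f v₀))).symm ((GG.symm y).map f))
  have mkF_val_none : ∀ f : Internal T → Fin (wcount T),
      ((mkF f) (G none)).val = (f v₀).val := by
    intro f
    show (Fin.cast hw ((finSuccEquiv' (Fin.castSucc (f v₀))).symm ((GG.symm (G none)).map f))).val
      = (f v₀).val
    rw [hsymmG none]
    simp [finSuccEquiv'_symm_none]
  have mkF_val_some : ∀ (f : Internal T → Fin (wcount T)) (x : Internal T),
      ((mkF f) (G (some x))).val =
        if (f x).val < (f v₀).val then (f x).val else (f x).val + 1 := by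
    intro f x
    show (Fin.cast hw ((finSuccEquiv' (Fin.castSucc (f v₀))).symm ((GG.symm (G (some x))).map f))).val
      = _
    rw [hsymmG (some x)]
    simp only [Option.map_some, finSuccEquiv'_symm_some, Fin.coe_cast]
    rw [succAbove_val]
    simp
  have hist : ∀ (f : Internal T → Fin (wcount T)), IsLabeledHistory T f →
      IsLabeledHistory T' (mkF f) := by
    intro f hf
    constructor
    · have hrw : mkF f = (finCongr hw) ∘ ((finSuccEquiv' (Fin.castSucc (f v₀))).symm) ∘
          (Equiv.optionCongr (Equiv.ofBijective f hf.1)) ∘ ⇑GG.symm := by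
        funext y; rfl
      rw [hrw]
      exact (finCongr hw).bijective.comp (((finSuccEquiv' _).symm.bijective).comp
        (((Equiv.optionCongr _).bijective).comp GG.symm.bijective))
    · intro u w hpre hne
      obtain ⟨zu, rfl⟩ : ∃ z, G z = u := ⟨GG.symm u, hGGapp u⟩
      obtain ⟨zw, rfl⟩ : ∃ z, G z = w := ⟨GG.symm w, hGGapp w⟩
      rw [Fin.lt_def]
      rcases zu with _ | x <;> rcases zw with _ | y
      · exact absurd rfl hne
      · -- u = new node, w = sig y
        rw [mkF_val_none, mkF_val_some]
        rw [hGnone, hGsome] at hpre hne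
        have hyp1 : sig p a b y.1 <+: p := by
          have h5 := hpre.length_le
          have h6 : (sig p a b y.1).length ≤ p.length := by
            rcases Nat.lt_or_ge (sig p a b y.1).length (p.length + 1) with h6 | h6
            · omega
            · exact absurd (hpre.eq_of_length (by simp at h5 ⊢; omega)) hne
          exact List.prefix_of_prefix_length_le hpre (List.prefix_append p [a]) h6
        have hyp2 : y.1 <+: p := by
          have := (sig_prefix p a b y.1 p).mp (by rw [sig_self]; exact hyp1)
          exact this
        have hle : (f v₀).val ≤ (f y).val := by
          by_cases hyv : y.1 = p
          · have : y = v₀ := Subtype.ext hyv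
            rw [this]
          · exact le_of_lt (hf.2 v₀ y hyp2 hyv)
        split_ifs <;> omega
      · -- u = sig x, w = new node
        rw [mkF_val_some, mkF_val_none]
        rw [hGnone, hGsome] at hpre hne
        have hpx : p <+: sig p a b x.1 := (List.prefix_append p [a]).trans hpre
        have hx : p <+: x.1 := by
          have := (sig_prefix p a b p x.1).mp (by rw [sig_self]; exact hpx)
          exact this
        have hxne : x.1 ≠ p := by
          rintro hh
          rw [hh, sig_self] at hpre
          have := hpre.length_le
          simp at this
        have hlt : f x < f v₀ := hf.2 x v₀ hx (fun hh => hxne hh.symm)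
        have hv := Fin.lt_def.mp hlt
        split_ifs <;> omega
      · -- both images of sig
        rw [mkF_val_some, mkF_val_some]
        rw [hGsome, hGsome] at hpre hne
        have hyx : y.1 <+: x.1 := (sig_prefix p a b y.1 x.1).mp hpre
        have hne' : y.1 ≠ x.1 := fun hh => hne (by rw [hh])
        have hv := Fin.lt_def.mp (hf.2 x y hyx hne')
        split_ifs <;> omega
  -- the injection between history sets
  let Φ : {f : Internal T → Fin (wcount T) // IsLabeledHistory T f} →
      {g : Internal T' → Fin (wcount T') // IsLabeledHistory T' g} :=
    fun fh => ⟨mkF fh.1, hist fh.1 fh.2⟩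
  have hΦinj : Function.Injective Φ := by
    rintro ⟨f, hf⟩ ⟨f', hf'⟩ hfg
    have hval : ∀ z, mkF f z = mkF f' z :=
      fun z => congrFun (congrArg Subtype.val hfg) z
    apply Subtype.ext
    show f = f'
    funext x
    have hvv : (f v₀).val = (f' v₀).val := by
      have h0 := congrArg Fin.val (hval (G none))
      rw [mkF_val_none, mkF_val_none] at h0
      exact h0
    have h1 := congrArg Fin.val (hval (G (some x)))
    rw [mkF_val_some, mkF_val_some] at h1
    apply Fin.ext
    split_ifs at h1 <;> omega
  -- witness history of T' not in the range
  obtain ⟨t₃, ht₃mem, ht₃⟩ := h3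
  obtain ⟨j, hja, hjget⟩ : ∃ j, j ≠ a ∧ (l₁ ++ node [t₁, t₂] :: (l₂ ++ l₃))[j]? = some t₃ := by
    rcases List.mem_append.mp ht₃mem with h | h
    · rcases List.mem_append.mp h with h | h
      · obtain ⟨n, hn⟩ := List.getElem?_of_mem h
        have hlt : n < a := (List.getElem?_eq_some_iff.mp hn).1
        exact ⟨n, by omega, by rw [List.getElem?_append_left hlt]; exact hn⟩
      · obtain ⟨n, hn⟩ := List.getElem?_of_mem h
        have hlt : n < b := (List.getElem?_eq_some_iff.mp hn).1
        refine ⟨a + 1 + n, by omega, ?_⟩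
        rw [List.getElem?_append_right (by omega)]
        have he : a + 1 + n - a = n + 1 := by omega
        rw [he, List.getElem?_cons_succ, List.getElem?_append_left hlt]
        exact hn
    · obtain ⟨n, hn⟩ := List.getElem?_of_mem h
      refine ⟨a + 1 + b + n, by omega, ?_⟩
      rw [List.getElem?_append_right (by omega)]
      have he : a + 1 + b + n - a = (b + n) + 1 := by omega
      rw [he, List.getElem?_cons_succ, List.getElem?_append_right (by omega)]
      have he2 : b + n - b = n := by omega
      rw [he2]
      exact hn
  obtain ⟨ds₃, rfl⟩ : ∃ ds, t₃ = node ds := by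
    cases t₃ with
    | leaf => exact absurd rfl ht₃
    | node ds => exact ⟨ds, rfl⟩
  have hx₃ : IntP T' (p ++ [j]) := by
    refine (MS2' [j]).mpr ?_
    rw [intP_node]
    exact ⟨node ds₃, hjget, intP_node_nil _⟩
  let x₃ : Internal T' := ⟨p ++ [j], hx₃⟩
  have hv'path : (G (some v₀)).1 = p := sig_self p a b
  -- the forcing partial order
  let sR : Internal T' → Internal T' → Prop := fun x y =>
    y.1 <+: x.1 ∨ ((p ++ [a]) <+: x.1 ∧ y.1 <+: p ++ [j])
  have haj : ¬ (p ++ [a]) <+: (p ++ [j]) := by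
    intro h
    have h5 := h.eq_of_length (by simp)
    have h6 := List.append_cancel_left h5
    simp at h6
    omega
  have sRrefl : ∀ x, sR x x := fun x => Or.inl (List.prefix_refl _)
  have sRtrans : ∀ x y z, sR x y → sR y z → sR x z := by
    rintro x y z (h1 | ⟨h1a, h1b⟩) (h2 | ⟨h2a, h2b⟩)
    · exact Or.inl (h2.trans h1)
    · exact Or.inr ⟨h2a.trans h1, h2b⟩
    · exact Or.inr ⟨h1a, h2.trans h1b⟩
    · exact Or.inr ⟨h1a, h2b⟩
  have sRanti : ∀ x y, sR x y → sR y x → x = y := by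
    rintro x y (h1 | ⟨h1a, h1b⟩) (h2 | ⟨h2a, h2b⟩)
    · exact Subtype.ext (h2.eq_of_length (h2.length_le.antisymm h1.length_le))
    · exact absurd ((h2a.trans h1).trans h2b) haj
    · exact absurd ((h1a.trans h2).trans h1b) haj
    · exact absurd (h1a.trans h2b) haj
  obtain ⟨g₀, hg₀bij, hg₀mono⟩ := exists_linext sR sRrefl sRtrans sRanti
  let g : Internal T' → Fin (wcount T') := fun y => Fin.cast hwT' (g₀ y)
  have hgval : ∀ y, (g y).val = (g₀ y).val := fun y => rfl
  have hgbij : Function.Bijective g := by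
    have hrw : g = (finCongr hwT') ∘ g₀ := rfl
    rw [hrw]
    exact (finCongr hwT').bijective.comp hg₀bij
  have hghist : IsLabeledHistory T' g := by
    refine ⟨hgbij, ?_⟩
    intro u w hpre hne
    have hneq : u ≠ w := fun hh => hne (by rw [hh])
    have h5 := hg₀mono u w (Or.inl hpre) hneq
    rw [Fin.lt_def] at h5 ⊢
    exact h5
  have hnotmem : (⟨g, hghist⟩ : {gg : Internal T' → Fin (wcount T') // IsLabeledHistory T' gg})
      ∉ Set.range Φ := by
    rintro ⟨⟨f, hf⟩, hfg⟩
    have hval : ∀ z, mkF f z = g z :=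
      fun z => congrFun (congrArg Subtype.val hfg) z
    have h_u₀ : (g (G none)).val = (f v₀).val := by
      rw [← hval]
      exact mkF_val_none f
    have h_v' : (g (G (some v₀))).val = (f v₀).val + 1 := by
      rw [← hval, mkF_val_some]
      simp
    have hm1 : g₀ (G none) < g₀ x₃ := by
      apply hg₀mono
      · exact Or.inr ⟨List.prefix_refl _, List.prefix_refl _⟩
      · intro hh
        have h6 := congrArg Subtype.val hh
        rw [hGnone] at h6
        have h7 := List.append_cancel_left h6
        simp at h7
        omega
    have hm2 : g₀ x₃ < g₀ (G (some v₀)) := by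
      apply hg₀mono
      · refine Or.inl ?_
        rw [hv'path]
        exact List.prefix_append p [j]
      · intro hh
        have h6 := congrArg (fun z => z.1.length) hh
        have h7 : (p ++ [j]).length = p.length := by rw [hv'path] at h6; exact h6
        simp at h7
    have hval1 : (g (G none)).val < (g x₃).val := by
      rw [hgval, hgval]
      exact Fin.lt_def.mp hm1
    have hval2 : (g x₃).val < (g (G (some v₀))).val := by
      rw [hgval, hgval]
      exact Fin.lt_def.mp hm2
    omega
  -- conclude
  haveI : Fintype {f : Internal T → Fin (wcount T) // IsLabeledHistory T f} :=
    Fintype.ofFinite _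
  haveI : Fintype {g : Internal T' → Fin (wcount T') // IsLabeledHistory T' g} :=
    Fintype.ofFinite _
  have hfinal : Nat.card {f : Internal T → Fin (wcount T) // IsLabeledHistory T f} <
      Nat.card {g : Internal T' → Fin (wcount T') // IsLabeledHistory T' g} := by
    rw [Nat.card_eq_fintype_card, Nat.card_eq_fintype_card]
    exact Fintype.card_lt_of_injective_of_notMem Φ hΦinj hnotmem
  exact hfinal

end RTree
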